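/- Let f : ℝ → ℝ be twice continuously differentiable and let u, v : ℝ × ℝ → ℝ be twice continuously differentiable with u(t,x) > 0 and v(t,x) > 0 everywhere, satisfying the general system ∂_t u = ∂_x( u ∂_x( f(u+v) ) ) and ∂_t v = ∂_x( v ∂_x( f(u+v) ) ). Then the relative entropy density satisfies the local conservation law ∂_t ( u log(u/v) ) = ∂_x ( u log(u/v) · ∂_x( f(u+v) ) ) at every point (t,x). -/

import Mathlib

open Real Set

/-- Partial derivative in the first (time) variable. -/
noncomputable def pt (f : ℝ → ℝ → ℝ) (t x : ℝ) : ℝ := deriv (fun s => f s x) t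

/-- Partial derivative in the second (space) variable. -/
noncomputable def px (f : ℝ → ℝ → ℝ) (t x : ℝ) : ℝ := deriv (fun y => f t y) x

lemma hasDerivAt_slice_t {W : ℝ → ℝ → ℝ} {t x : ℝ}
    (h : DifferentiableAt ℝ (Function.uncurry W) (t, x)) :
    HasDerivAt (fun s => W s x) (fderiv ℝ (Function.uncurry W) (t, x) (1, 0)) t :=
  by have := h.hasFDerivAt.comp_hasDerivAt t ((hasDerivAt_id' t).prodMk (hasDerivAt_const t x)); exact this

lemma hasDerivAt_slice_x {W : ℝ → ℝ → ℝ} {t x : ℝ}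
    (h : DifferentiableAt ℝ (Function.uncurry W) (t, x)) :
    HasDerivAt (fun y => W t y) (fderiv ℝ (Function.uncurry W) (t, x) (0, 1)) x :=
  h.hasFDerivAt.comp_hasDerivAt x ((hasDerivAt_const x t).prodMk (hasDerivAt_id x))

theorem stmt_14 (f : ℝ → ℝ) (hf : ContDiff ℝ 2 f) (u v : ℝ → ℝ → ℝ)
    (husmooth : ContDiff ℝ 2 (Function.uncurry u))
    (hvsmooth : ContDiff ℝ 2 (Function.uncurry v))
    (hupos : ∀ t x : ℝ, 0 < u t x) (hvpos : ∀ t x : ℝ, 0 < v t x)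
    (hu : ∀ t x : ℝ,
      pt u t x = px (fun s y => u s y * px (fun a b => f (u a b + v a b)) s y) t x)
    (hv : ∀ t x : ℝ,
      pt v t x = px (fun s y => v s y * px (fun a b => f (u a b + v a b)) s y) t x) :
    ∀ t x : ℝ,
      pt (fun s y => u s y * Real.log (u s y / v s y)) t x
        = px (fun s y =>
            u s y * Real.log (u s y / v s y)
              * px (fun a b => f (u a b + v a b)) s y) t x := by
  -- The composed flux potential, uncurried.
  set UG : ℝ × ℝ → ℝ := fun p => f (u p.1 p.2 + v p.1 p.2) with hUGdef
  have hUG : ContDiff ℝ 2 UG := hf.comp (husmooth.add hvsmooth)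
  -- Its spatial derivative, as a C¹ function of (t,x).
  set Q : ℝ × ℝ → ℝ := fun p => fderiv ℝ UG p (0, 1) with hQdef
  have hQ : ContDiff ℝ 1 Q :=
    (hUG.fderiv_right (by norm_num)).clm_apply contDiff_const
  have hPQ : ∀ s y : ℝ, px (fun a b => f (u a b + v a b)) s y = Q (s, y) := by
    intro s y
    have hd : DifferentiableAt ℝ UG (s, y) :=
      (hUG.differentiable (by norm_num)).differentiableAt
    exact (hasDerivAt_slice_x (W := fun a b => f (u a b + v a b)) hd).deriv
  intro t x
  -- differentiability of u, v at (t,x)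
  have hud : DifferentiableAt ℝ (Function.uncurry u) (t, x) :=
    (husmooth.differentiable (by norm_num)).differentiableAt
  have hvd : DifferentiableAt ℝ (Function.uncurry v) (t, x) :=
    (hvsmooth.differentiable (by norm_num)).differentiableAt
  have hQd : DifferentiableAt ℝ Q (t, x) :=
    (hQ.differentiable one_ne_zero).differentiableAt
  -- slice derivatives
  set ut := fderiv ℝ (Function.uncurry u) (t, x) (1, 0) with hutdef
  set ux := fderiv ℝ (Function.uncurry u) (t, x) (0, 1) with huxdef
  set vt := fderiv ℝ (Function.uncurry v) (t, x) (1, 0) with hvtdef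
  set vx := fderiv ℝ (Function.uncurry v) (t, x) (0, 1) with hvxdef
  set Fx := fderiv ℝ Q (t, x) (0, 1) with hFxdef
  have hUt : HasDerivAt (fun s => u s x) ut t := hasDerivAt_slice_t hud
  have hVt : HasDerivAt (fun s => v s x) vt t := hasDerivAt_slice_t hvd
  have hUx : HasDerivAt (fun y => u t y) ux x := hasDerivAt_slice_x hud
  have hVx : HasDerivAt (fun y => v t y) vx x := hasDerivAt_slice_x hvd
  have hQx : HasDerivAt (fun y => Q (t, y)) Fx x :=
    hasDerivAt_slice_x (W := fun s y => Q (s, y)) hQd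
  set a := u t x
  set b := v t x
  have ha : a ≠ 0 := (hupos t x).ne'
  have hb : b ≠ 0 := (hvpos t x).ne'
  -- log rewriting
  have hlog : ∀ s y : ℝ, Real.log (u s y / v s y) = Real.log (u s y) - Real.log (v s y) :=
    fun s y => Real.log_div (hupos s y).ne' (hvpos s y).ne'
  -- time-slice derivatives of log u, log v
  have hLUt : HasDerivAt (fun s => Real.log (u s x)) (ut / a) t := hUt.log ha
  have hLVt : HasDerivAt (fun s => Real.log (v s x)) (vt / b) t := hVt.log hb
  have hLUx : HasDerivAt (fun y => Real.log (u t y)) (ux / a) x := hUx.log ha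
  have hLVx : HasDerivAt (fun y => Real.log (v t y)) (vx / b) x := hVx.log hb
  -- LHS value
  have hLHS : pt (fun s y => u s y * Real.log (u s y / v s y)) t x
      = ut * (Real.log a - Real.log b) + a * (ut / a - vt / b) := by
    have h1 : HasDerivAt (fun s => u s x * (Real.log (u s x) - Real.log (v s x)))
        (ut * (Real.log a - Real.log b) + a * (ut / a - vt / b)) t :=
      hUt.mul (hLUt.sub hLVt)
    have h2 : (fun s => u s x * Real.log (u s x / v s x))
        = fun s => u s x * (Real.log (u s x) - Real.log (v s x)) := by
      funext s; rw [hlog]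
    show deriv (fun s => u s x * Real.log (u s x / v s x)) t = _
    rw [h2]; exact h1.deriv
  -- the two equations at (t,x)
  have hQtx : Q (t, x) = Q (t, x) := rfl
  have hueq : ut = ux * Q (t, x) + a * Fx := by
    have h1 : HasDerivAt (fun y => u t y * Q (t, y)) (ux * Q (t, x) + a * Fx) x :=
      hUx.mul hQx
    have h2 := hu t x
    have h3 : pt u t x = ut := hUt.deriv
    have h4 : px (fun s y => u s y * px (fun a b => f (u a b + v a b)) s y) t x
        = ux * Q (t, x) + a * Fx := by
      show deriv (fun y => u t y * px (fun a b => f (u a b + v a b)) t y) x = _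
      have h5 : (fun y => u t y * px (fun a b => f (u a b + v a b)) t y)
          = fun y => u t y * Q (t, y) := by
        funext y; rw [hPQ]
      rw [h5]; exact h1.deriv
    rw [← h3, h2, h4]
  have hveq : vt = vx * Q (t, x) + b * Fx := by
    have h1 : HasDerivAt (fun y => v t y * Q (t, y)) (vx * Q (t, x) + b * Fx) x :=
      hVx.mul hQx
    have h3 : pt v t x = vt := hVt.deriv
    have h4 : px (fun s y => v s y * px (fun a b => f (u a b + v a b)) s y) t x
        = vx * Q (t, x) + b * Fx := by
      show deriv (fun y => v t y * px (fun a b => f (u a b + v a b)) t y) x = _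
      have h5 : (fun y => v t y * px (fun a b => f (u a b + v a b)) t y)
          = fun y => v t y * Q (t, y) := by
        funext y; rw [hPQ]
      rw [h5]; exact h1.deriv
    rw [← h3, hv t x, h4]
  -- RHS value
  have hRHS : px (fun s y =>
      u s y * Real.log (u s y / v s y) * px (fun a b => f (u a b + v a b)) s y) t x
      = (ux * (Real.log a - Real.log b) + a * (ux / a - vx / b)) * Q (t, x)
        + a * (Real.log a - Real.log b) * Fx := by
    have h1 : HasDerivAt
        (fun y => u t y * (Real.log (u t y) - Real.log (v t y)) * Q (t, y))
        ((ux * (Real.log a - Real.log b) + a * (ux / a - vx / b)) * Q (t, x)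
          + a * (Real.log a - Real.log b) * Fx) x :=
      (hUx.mul (hLUx.sub hLVx)).mul hQx
    show deriv (fun y =>
      u t y * Real.log (u t y / v t y) * px (fun a b => f (u a b + v a b)) t y) x = _
    have h2 : (fun y =>
        u t y * Real.log (u t y / v t y) * px (fun a b => f (u a b + v a b)) t y)
        = fun y => u t y * (Real.log (u t y) - Real.log (v t y)) * Q (t, y) := by
      funext y; rw [hlog, hPQ]
    rw [h2]; exact h1.deriv
  rw [hLHS, hRHS, hueq, hveq]
  field_simp
  ring
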